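/- Let T₀, T₁ : ℝ → ℝ be given by T₀(x) = x/2 and T₁(x) = (3x+1)/2. The semigroup of maps generated by T₀ and T₁ under composition is free on these two generators: if (i₁,…,iₘ) and (j₁,…,jₙ) are nonempty finite sequences with entries in {0,1} such that the compositions T_{i₁} ∘ ⋯ ∘ T_{iₘ} and T_{j₁} ∘ ⋯ ∘ T_{jₙ} are equal as functions on ℝ, then m = n and i_k = j_k for all k. -/

import Mathlib

/-- Apply the composition T_{i₁} ∘ ⋯ ∘ T_{iₘ} to x, where `false` stands for
T₀(x) = x/2 and `true` stands for T₁(x) = (3x+1)/2, and the list is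
[i₁, …, iₘ]. -/
noncomputable def applyWord (l : List Bool) (x : ℝ) : ℝ :=
  l.foldr (fun b y => if b then (3 * y + 1) / 2 else y / 2) x

namespace MRaux

noncomputable def step (b : Bool) (y : ℝ) : ℝ := if b then (3 * y + 1) / 2 else y / 2

lemma applyWord_nil (x : ℝ) : applyWord [] x = x := rfl

lemma applyWord_cons (b : Bool) (l : List Bool) (x : ℝ) :
    applyWord (b :: l) x = step b (applyWord l x) := rfl

lemma applyWord_append (l : List Bool) (b : Bool) (x : ℝ) :
    applyWord (l ++ [b]) x = applyWord l (step b x) := by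
  simp [applyWord, List.foldr_append, step]

noncomputable def sl (l : List Bool) : ℝ := 3 ^ (l.count true) / 2 ^ l.length

lemma applyWord_affine (l : List Bool) (x : ℝ) :
    applyWord l x = sl l * x + applyWord l 0 := by
  induction l with
  | nil => simp [applyWord_nil, sl]
  | cons b l ih =>
    cases b <;>
      simp only [applyWord_cons, step, if_true, if_false, Bool.false_eq_true, sl,
        List.count_cons, List.length_cons, ih] <;>
      · simp only [sl, beq_true, if_true, if_false,
          Bool.false_eq_true] at *
        push_cast
        field_simp
        ring

def intc : List Bool → ℤ
  | [] => 0
  | b :: l => if b then 3 * intc l + 2 ^ l.length else intc l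

lemma intc_spec (l : List Bool) : (intc l : ℝ) = 2 ^ l.length * applyWord l 0 := by
  induction l with
  | nil => simp [intc, applyWord_nil]
  | cons b l ih =>
    cases b <;>
      simp only [intc, applyWord_cons, step, if_true, if_false, Bool.false_eq_true,
        List.length_cons] <;>
      · push_cast
        rw [show ((2:ℝ) ^ (l.length + 1)) = 2 ^ l.length * 2 by ring]
        field_simp
        nlinarith [ih]

lemma intc_parity (l : List Bool) (hl : l ≠ []) :
    intc l % 2 = if l.getLast hl then 1 else 0 := by
  induction l with
  | nil => exact absurd rfl hl
  | cons b l ih =>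
    cases l with
    | nil => cases b <;> simp [intc]
    | cons c t =>
      have hne : (c :: t) ≠ [] := by simp
      have hlast : (b :: c :: t).getLast hl = (c :: t).getLast hne :=
        List.getLast_cons hne
      have hdvd : (2 : ℤ) ∣ 2 ^ (c :: t).length := dvd_pow_self 2 (by simp)
      rw [hlast, ← ih hne]
      cases b <;> simp only [intc, if_true, if_false, Bool.false_eq_true]
      omega

lemma sl_inj {l₁ l₂ : List Bool} (h : sl l₁ = sl l₂) :
    l₁.length = l₂.length := by
  have h2 : (3:ℝ) ^ (l₁.count true) * 2 ^ l₂.length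
      = 3 ^ (l₂.count true) * 2 ^ l₁.length := by
    simp only [sl] at h
    field_simp at h
    linarith
  have h3 : (3 ^ (l₁.count true) * 2 ^ l₂.length : ℕ)
      = 3 ^ (l₂.count true) * 2 ^ l₁.length := by exact_mod_cast h2
  have := congrArg (fun n => n.factorization 2) h3
  simpa [Nat.factorization_mul, pow_ne_zero, Nat.Prime.factorization_pow,
    Nat.prime_two, Nat.prime_three, Finsupp.single_apply] using this.symm

lemma step_surj (b : Bool) (y : ℝ) : ∃ x, step b x = y := by
  cases b
  · exact ⟨2 * y, by simp [step]⟩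
  · exact ⟨(2 * y - 1) / 3, by simp [step]; ring⟩

end MRaux

open MRaux in
/-- (Misiurewicz–Rodrigues, 2005) The semigroup generated by T₀(x) = x/2 and
T₁(x) = (3x+1)/2 under composition is free on these two generators: if two
nonempty words define the same function on ℝ, the words coincide. -/
theorem semigroup_free_on_T0_T1 (l₁ l₂ : List Bool) (h₁ : l₁ ≠ []) (h₂ : l₂ ≠ [])
    (h : ∀ x : ℝ, applyWord l₁ x = applyWord l₂ x) : l₁ = l₂ := by
  have key : ∀ n (l₁ l₂ : List Bool), l₁.length = n → l₁ ≠ [] → l₂ ≠ [] →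
      (∀ x : ℝ, applyWord l₁ x = applyWord l₂ x) → l₁ = l₂ := by
    intro n
    induction n using Nat.strong_induction_on with
    | _ n ih =>
      intro l₁ l₂ hn h₁ h₂ h
      have hc : applyWord l₁ 0 = applyWord l₂ 0 := h 0
      have hs : sl l₁ = sl l₂ := by
        have h1 := h 1
        rw [applyWord_affine l₁, applyWord_affine l₂] at h1
        linarith
      have hlen : l₁.length = l₂.length := sl_inj hs
      have hint : intc l₁ = intc l₂ := by
        have : (intc l₁ : ℝ) = intc l₂ := by
          rw [intc_spec, intc_spec, hlen, hc]
        exact_mod_cast this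
      have hlast : l₁.getLast h₁ = l₂.getLast h₂ := by
        have p1 := intc_parity l₁ h₁
        have p2 := intc_parity l₂ h₂
        rw [hint, p2] at p1
        cases hb1 : l₁.getLast h₁ <;> cases hb2 : l₂.getLast h₂ <;>
          simp_all
      set b := l₂.getLast h₂ with hb
      have e1 : l₁ = l₁.dropLast ++ [b] := by
        rw [← hlast]; exact (List.dropLast_append_getLast h₁).symm
      have e2 : l₂ = l₂.dropLast ++ [b] := (List.dropLast_append_getLast h₂).symm
      have h' : ∀ y : ℝ, applyWord l₁.dropLast y = applyWord l₂.dropLast y := by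
        intro y
        obtain ⟨x, hx⟩ := step_surj b y
        have := h x
        rw [e1, e2, applyWord_append, applyWord_append, hx] at this
        -- careful: rewriting e1 inside h x
        exact this
      cases ht : l₁.dropLast with
      | nil =>
        have hl1 : l₁.length = 1 := by rw [e1, ht]; simp
        have ht2 : l₂.dropLast = [] := by
          apply List.eq_nil_of_length_eq_zero
          rw [List.length_dropLast, ← hlen, hl1]
        rw [e1, e2, ht, ht2]
      | cons c t =>
        have hne1 : l₁.dropLast ≠ [] := by rw [ht]; simp
        have hne2 : l₂.dropLast ≠ [] := by
          intro hnil
          have := hlen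
          rw [e1, e2, hnil] at this
          simp [ht] at this
        have hlt : l₁.dropLast.length < n := by
          rw [← hn]
          conv_rhs => rw [e1]
          simp
        have := ih _ hlt l₁.dropLast l₂.dropLast rfl hne1 hne2 h'
        rw [e1, e2, this]
  exact key l₁.length l₁ l₂ rfl h₁ h₂ h
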